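/- arXiv:1710.01208 — 2 statements merged into one kernel-verified Lean document; each statement's English description precedes it below -/
import Mathlib

section
/- Fix L ≥ 1, probabilities p_1,…,p_L and a mean μ > 0 with κ ≥ L+1, and let H = H(μ,p_L). If z̃_H ≤ e^{−2/(L+1)}, then for every F ∈ F(μ,p_L) one has g_F'(z̃_H) ≥ g_H'(z̃_H), and consequently z̃_F ≥ z̃_H. -/
open scoped BigOperators

/-- A degree distribution: a sequence of nonnegative probabilities on the positive
integers summing to one, with finite mean and `p 2 ≠ 1`. -/
structure DegreeDist where
  p : ℕ → ℝ
  nonneg : ∀ d, 0 ≤ p d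
  zero : p 0 = 0
  psummable : Summable p
  sum_one : ∑' d : ℕ, p d = 1
  mean_summable : Summable fun d : ℕ => (d : ℝ) * p d
  two_ne_one : p 2 ≠ 1

/-- The mean `μ_F` of a degree distribution. -/
noncomputable def mu (F : DegreeDist) : ℝ := ∑' d : ℕ, (d : ℝ) * F.p d

/-- The probability generating function `g_F`. -/
noncomputable def pgf (F : DegreeDist) (s : ℝ) : ℝ := ∑' d : ℕ, F.p d * s ^ d

/-- The derivative `g_F'` of the probability generating function. -/
noncomputable def pgfD (F : DegreeDist) (s : ℝ) : ℝ := ∑' d : ℕ, (d : ℝ) * F.p d * s ^ (d - 1)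

/-- `z` is the smallest `s ∈ [0,1]` with `m * s = g_F'(s)`.  Taking `m = mu F` gives `z̃_F`;
taking `m = μ` gives `z̃_F^{(μ)}`. -/
def IsSmallestRoot (F : DegreeDist) (m z : ℝ) : Prop :=
  z ∈ Set.Icc (0 : ℝ) 1 ∧ m * z = pgfD F z ∧
    ∀ s ∈ Set.Icc (0 : ℝ) 1, m * s = pgfD F s → z ≤ s

/-- Membership in the class `F(p_L)`: the first `L` probabilities agree with `p`. -/
def MemF (L : ℕ) (p : ℕ → ℝ) (F : DegreeDist) : Prop :=
  ∀ d, 1 ≤ d → d ≤ L → F.p d = p d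

/-- The remaining mass `p_{>L} = 1 - ∑_{i=1}^L p_i`. -/
noncomputable def pGt (L : ℕ) (p : ℕ → ℝ) : ℝ := 1 - ∑ i ∈ Finset.Icc 1 L, p i

/-- The distribution `G = G(p_L)`: all remaining mass at `L+1`. -/
def IsG (L : ℕ) (p : ℕ → ℝ) (G : DegreeDist) : Prop :=
  (∀ d, 1 ≤ d → d ≤ L → G.p d = p d) ∧
  G.p (L + 1) = pGt L p ∧
  ∀ d, L + 1 < d → G.p d = 0

/-- `κ = (μ - ∑_{d=1}^L d p_d) / p_{>L}`. -/
noncomputable def kappa (L : ℕ) (p : ℕ → ℝ) (μ : ℝ) : ℝ :=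
  (μ - ∑ d ∈ Finset.Icc 1 L, (d : ℝ) * p d) / pGt L p

/-- `r_m = (κ - (L+1)) / (m - (L+1))`. -/
noncomputable def rmass (L : ℕ) (κ : ℝ) (m : ℕ) : ℝ :=
  (κ - ((L : ℝ) + 1)) / ((m : ℝ) - ((L : ℝ) + 1))

/-- The distribution `G_m`: mass `(1-r_m) p_{>L}` at `L+1` and `r_m p_{>L}` at `m`. -/
def IsGm (L : ℕ) (p : ℕ → ℝ) (μ : ℝ) (m : ℕ) (Gm : DegreeDist) : Prop :=
  (∀ d, 1 ≤ d → d ≤ L → Gm.p d = p d) ∧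
  Gm.p (L + 1) = (1 - rmass L (kappa L p μ) m) * pGt L p ∧
  Gm.p m = rmass L (kappa L p μ) m * pGt L p ∧
  ∀ d, L + 1 < d → d ≠ m → Gm.p d = 0

/-- The distribution `H = H(μ, p_L)`: remaining mass at `⌊κ⌋` and `⌊κ⌋+1`, preserving mean `μ`. -/
def IsH (L : ℕ) (p : ℕ → ℝ) (μ : ℝ) (H : DegreeDist) : Prop :=
  (∀ d, 1 ≤ d → d ≤ L → H.p d = p d) ∧
  H.p ⌊kappa L p μ⌋₊ = ((⌊kappa L p μ⌋₊ : ℝ) + 1 - kappa L p μ) * pGt L p ∧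
  H.p (⌊kappa L p μ⌋₊ + 1) = (kappa L p μ - (⌊kappa L p μ⌋₊ : ℝ)) * pGt L p ∧
  ∀ d, L < d → d ≠ ⌊kappa L p μ⌋₊ → d ≠ ⌊kappa L p μ⌋₊ + 1 → H.p d = 0



private lemma convex_aux (c T : ℝ) (hT : 0 < T) (hc : c * T ≤ -2) :
    ConvexOn ℝ (Set.Ici T) (fun x => x * Real.exp (c * (x - 1))) := by
  have hcneg : c < 0 := by nlinarith
  refine convexOn_of_hasDerivWithinAt2_nonneg (f' := fun x => (1 + c * x) * Real.exp (c * (x - 1)))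
    (f'' := fun x => c * (2 + c * x) * Real.exp (c * (x - 1))) (convex_Ici T)
    ?_ ?_ ?_ ?_
  · exact (continuous_id.mul (Real.continuous_exp.comp (by continuity))).continuousOn
  · intro x _
    have h1 : HasDerivAt (fun y : ℝ => c * (y - 1)) c x := by
      simpa using ((hasDerivAt_id x).sub_const 1).const_mul c
    have h2 := h1.exp
    have h3 := (hasDerivAt_id x).mul h2
    have : HasDerivAt (fun y : ℝ => y * Real.exp (c * (y - 1)))
        ((1 + c * x) * Real.exp (c * (x - 1))) x := by
      exact h3.congr_deriv (by simp only [id]; ring)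
    exact this.hasDerivWithinAt
  · intro x _
    have h1 : HasDerivAt (fun y : ℝ => c * (y - 1)) c x := by
      simpa using ((hasDerivAt_id x).sub_const 1).const_mul c
    have h2 := h1.exp
    have h4 : HasDerivAt (fun y : ℝ => 1 + c * y) c x := by
      simpa using ((hasDerivAt_id x).const_mul c).const_add 1
    have h3 := h4.mul h2
    have : HasDerivAt (fun y : ℝ => (1 + c * y) * Real.exp (c * (y - 1)))
        (c * (2 + c * x) * Real.exp (c * (x - 1))) x := by
      exact h3.congr_deriv (by ring)
    exact this.hasDerivWithinAt
  · intro x hx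
    rw [interior_Ici] at hx
    have hxT : T ≤ x := le_of_lt hx
    have h1 : c * x ≤ c * T := mul_le_mul_of_nonpos_left hxT (le_of_lt hcneg)
    have h2 : 2 + c * x ≤ 0 := by linarith
    have h3 : 0 ≤ c * (2 + c * x) := by nlinarith
    exact mul_nonneg h3 (Real.exp_pos _).le

private lemma chord_conv {f : ℝ → ℝ} {T : ℝ} (hf : ConvexOn ℝ (Set.Ici T) f) {u x : ℝ}
    (hu : T ≤ u) (hx : T ≤ x) (hcase : x ≤ u ∨ u + 1 ≤ x) :
    f u + (x - u) * (f (u + 1) - f u) ≤ f x := by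
  have hu1 : T ≤ u + 1 := by linarith
  rcases hcase with h | h
  · rcases eq_or_lt_of_le h with rfl | h
    · simp
    · have := hf.slope_mono_adjacent hx hu1 h (by linarith : u < u + 1)
      rw [show u + 1 - u = 1 by ring, div_one] at this
      have h2 : 0 < u - x := by linarith
      rw [div_le_iff₀ h2] at this
      nlinarith
  · rcases eq_or_lt_of_le h with rfl | h
    · have : f u + (u + 1 - u) * (f (u + 1) - f u) = f (u + 1) := by ring
      linarith
    · have := hf.slope_mono_adjacent hu hx (by linarith : u < u + 1) h
      rw [show u + 1 - u = 1 by ring, div_one] at this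
      have h2 : 0 < x - (u + 1) := by linarith
      rw [le_div_iff₀ h2] at this
      nlinarith

private lemma chord_nat (L k : ℕ) (hL : 1 ≤ L) (hLk : L + 1 ≤ k) (s : ℝ) (hs0 : 0 ≤ s)
    (hs1 : s ≤ Real.exp (-(2 / ((L : ℝ) + 1)))) (d : ℕ) (hd : L + 1 ≤ d) :
    (k : ℝ) * s ^ (k - 1) + ((d : ℝ) - (k : ℝ)) * (((k : ℝ) + 1) * s ^ k - (k : ℝ) * s ^ (k - 1))
      ≤ (d : ℝ) * s ^ (d - 1) := by
  rcases hs0.eq_or_lt with rfl | hs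
  · have hk1 : k - 1 ≠ 0 := by omega
    have hd1 : d - 1 ≠ 0 := by omega
    have hk0 : k ≠ 0 := by omega
    rw [zero_pow hk1, zero_pow hd1, zero_pow hk0]
    simp
  · set c := Real.log s with hc
    have hL1 : (0 : ℝ) < (L : ℝ) + 1 := by positivity
    have hlog : c ≤ -(2 / ((L : ℝ) + 1)) := by
      have := Real.log_le_log hs hs1
      rwa [Real.log_exp] at this
    have hcT : c * ((L : ℝ) + 1) ≤ -2 := by
      have h2 : -(2 / ((L : ℝ) + 1)) * ((L : ℝ) + 1) = -2 := by field_simp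
      nlinarith
    have hconv := convex_aux c ((L : ℝ) + 1) hL1 hcT
    have hval : ∀ n : ℕ, 1 ≤ n →
        (n : ℝ) * Real.exp (c * ((n : ℝ) - 1)) = (n : ℝ) * s ^ (n - 1) := by
      intro n hn
      have : (n : ℝ) - 1 = ((n - 1 : ℕ) : ℝ) := by
        push_cast [Nat.cast_sub hn]; ring
      rw [this, mul_comm c, Real.exp_nat_mul, Real.exp_log hs]
    have hu : ((L : ℝ) + 1) ≤ (k : ℝ) := by exact_mod_cast Nat.cast_le.mpr hLk
    have hx : ((L : ℝ) + 1) ≤ (d : ℝ) := by exact_mod_cast Nat.cast_le.mpr hd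
    have hcase : (d : ℝ) ≤ (k : ℝ) ∨ (k : ℝ) + 1 ≤ (d : ℝ) := by
      rcases le_or_gt d k with h | h
      · exact Or.inl (by exact_mod_cast h)
      · exact Or.inr (by exact_mod_cast h)
    have hch := chord_conv hconv hu hx hcase
    have e1 := hval k (by omega)
    have e2 := hval (k + 1) (by omega)
    have e3 := hval d (by omega)
    rw [show ((k : ℝ) + 1) - 1 = (k : ℝ) + 1 - 1 from rfl] at hch
    have ek1 : ((k + 1 : ℕ) : ℝ) = (k : ℝ) + 1 := by push_cast; ring
    rw [← ek1] at hch
    rw [e1, e2, e3] at hch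
    rw [ek1] at hch
    rw [show (k + 1) - 1 = k by omega] at hch
    convert hch using 2

private lemma tsum_head_tail (L : ℕ) (p : ℕ → ℝ) (G : DegreeDist)
    (hhead : ∀ d, 1 ≤ d → d ≤ L → G.p d = p d) (w : ℕ → ℝ)
    (hsum : Summable (fun d => G.p d * w d)) :
    ∑' d, G.p d * w d = ∑ d ∈ Finset.Icc 1 L, p d * w d
      + ∑' d, (if d ≤ L then 0 else G.p d * w d) := by
  set g1 : ℕ → ℝ := fun d => if d ≤ L then G.p d * w d else 0 with hg1
  set g2 : ℕ → ℝ := fun d => if d ≤ L then 0 else G.p d * w d with hg2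
  have h12 : ∀ d, G.p d * w d = g1 d + g2 d := by
    intro d; by_cases h : d ≤ L <;> simp [hg1, hg2, h]
  have hg1sum : Summable g1 := by
    apply summable_of_ne_finset_zero (s := Finset.range (L + 1))
    intro d hd
    have : ¬ d ≤ L := by simpa [Finset.mem_range, Nat.lt_succ_iff] using hd
    simp [hg1, this]
  have hg2sum : Summable g2 := by
    apply (hsum.sub hg1sum).congr
    intro d; by_cases h : d ≤ L <;> simp [hg1, hg2, h]
  have hg1val : ∑' d, g1 d = ∑ d ∈ Finset.Icc 1 L, p d * w d := by
    rw [tsum_eq_sum (s := Finset.Icc 1 L)]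
    · apply Finset.sum_congr rfl
      intro d hd
      rw [Finset.mem_Icc] at hd
      simp [hg1, hd.2, hhead d hd.1 hd.2]
    · intro d hd
      rw [Finset.mem_Icc] at hd
      push_neg at hd
      by_cases h : d ≤ L
      · have : d = 0 := by omega
        simp [hg1, this, G.zero]
      · simp [hg1, h]
  calc ∑' d, G.p d * w d = ∑' d, (g1 d + g2 d) := tsum_congr h12
    _ = ∑' d, g1 d + ∑' d, g2 d := Summable.tsum_add hg1sum hg2sum
    _ = ∑ d ∈ Finset.Icc 1 L, p d * w d + ∑' d, g2 d := by rw [hg1val]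

private lemma tsum_affine (G : DegreeDist) (α β : ℝ) :
    Summable (fun d : ℕ => G.p d * (α + β * d)) ∧
      ∑' d : ℕ, G.p d * (α + β * d) = α + β * mu G := by
  have h1 : Summable (fun d : ℕ => α * G.p d + β * ((d : ℝ) * G.p d)) :=
    (G.psummable.mul_left α).add (G.mean_summable.mul_left β)
  have he : ∀ d : ℕ, α * G.p d + β * ((d : ℝ) * G.p d) = G.p d * (α + β * d) := by
    intro d; ring
  constructor
  · exact h1.congr he
  · rw [← tsum_congr he, Summable.tsum_add (G.psummable.mul_left α) (G.mean_summable.mul_left β),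
      tsum_mul_left, tsum_mul_left, G.sum_one, mul_one, mu]

private lemma tsum_tail_affine (L : ℕ) (p : ℕ → ℝ) (G : DegreeDist)
    (hhead : ∀ d, 1 ≤ d → d ≤ L → G.p d = p d) (α β : ℝ) :
    ∑' d : ℕ, (if d ≤ L then 0 else G.p d * (α + β * d)) =
      α + β * mu G - ∑ d ∈ Finset.Icc 1 L, p d * (α + β * d) := by
  obtain ⟨hsum, hval⟩ := tsum_affine G α β
  have := tsum_head_tail L p G hhead (fun d => α + β * d) hsum
  rw [hval] at this
  linarith

private lemma mu_H_eq (L : ℕ) (hL : 1 ≤ L) (p : ℕ → ℝ)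
    (hplt : ∑ i ∈ Finset.Icc 1 L, p i < 1) (μ : ℝ)
    (hκ : (L : ℝ) + 1 ≤ kappa L p μ) (H : DegreeDist) (hH : IsH L p μ H) : mu H = μ := by
  set κ := kappa L p μ with hκdef
  set k := ⌊κ⌋₊ with hk
  have hpGt : 0 < pGt L p := by unfold pGt; linarith
  have hκ0 : (0 : ℝ) ≤ κ := le_trans (by positivity) hκ
  have hLk : L + 1 ≤ k := Nat.le_floor (by exact_mod_cast hκ)
  have hsum : Summable (fun d : ℕ => H.p d * (d : ℝ)) :=
    H.mean_summable.congr (fun d => mul_comm _ _)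
  have h1 : mu H = ∑' d : ℕ, H.p d * (d : ℝ) := tsum_congr (fun d => mul_comm _ _)
  rw [h1, tsum_head_tail L p H hH.1 (fun d => (d : ℝ)) hsum]
  have htail : ∑' d : ℕ, (if d ≤ L then 0 else H.p d * (d : ℝ)) = κ * pGt L p := by
    rw [tsum_eq_sum (s := {k, k + 1})]
    · rw [Finset.sum_pair (by omega : k ≠ k + 1)]
      have h2 : ¬ k ≤ L := by omega
      have h3 : ¬ k + 1 ≤ L := by omega
      rw [if_neg h2, if_neg h3, hH.2.1, hH.2.2.1]
      push_cast
      ring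
    · intro d hd
      simp only [Finset.mem_insert, Finset.mem_singleton] at hd
      push_neg at hd
      by_cases h : d ≤ L
      · simp [h]
      · rw [if_neg h, hH.2.2.2 d (by omega) hd.1 hd.2, zero_mul]
  rw [htail]
  have hκval : κ * pGt L p = μ - ∑ d ∈ Finset.Icc 1 L, (d : ℝ) * p d := by
    rw [hκdef]; unfold kappa; field_simp
  rw [hκval]
  have : ∑ d ∈ Finset.Icc 1 L, p d * (d : ℝ) = ∑ d ∈ Finset.Icc 1 L, (d : ℝ) * p d :=
    Finset.sum_congr rfl (fun d _ => mul_comm _ _)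
  rw [this]; ring

private lemma key_ineq (L : ℕ) (hL : 1 ≤ L) (p : ℕ → ℝ)
    (hplt : ∑ i ∈ Finset.Icc 1 L, p i < 1) (μ : ℝ)
    (hκ : (L : ℝ) + 1 ≤ kappa L p μ) (H : DegreeDist) (hH : IsH L p μ H)
    (F : DegreeDist) (hF : MemF L p F) (hFmu : mu F = μ)
    (s : ℝ) (hs0 : 0 ≤ s) (hs1 : s ≤ Real.exp (-(2 / ((L : ℝ) + 1)))) :
    pgfD H s ≤ pgfD F s := by
  have hmuH : mu H = μ := mu_H_eq L hL p hplt μ hκ H hH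
  set κ := kappa L p μ with hκdef
  set k := ⌊κ⌋₊ with hk
  have hκ0 : (0 : ℝ) ≤ κ := le_trans (by positivity) hκ
  have hLk : L + 1 ≤ k := Nat.le_floor (by exact_mod_cast hκ)
  have hs_le1 : s ≤ 1 := by
    have h0 : (0 : ℝ) ≤ 2 / ((L : ℝ) + 1) := by positivity
    have h1 := Real.exp_le_exp.mpr (show -(2 / ((L : ℝ) + 1)) ≤ 0 by linarith)
    rw [Real.exp_zero] at h1
    linarith
  set β : ℝ := ((k : ℝ) + 1) * s ^ k - (k : ℝ) * s ^ (k - 1) with hβ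
  set α : ℝ := (k : ℝ) * s ^ (k - 1) - (k : ℝ) * β with hα
  set c : ℕ → ℝ := fun d => if d ≤ L then (d : ℝ) * s ^ (d - 1) else α + β * d with hc
  have hchord : ∀ d : ℕ, L + 1 ≤ d → α + β * (d : ℝ) ≤ (d : ℝ) * s ^ (d - 1) := by
    intro d hd
    have h := chord_nat L k hL hLk s hs0 hs1 d hd
    have heq : α + β * (d : ℝ) = (k : ℝ) * s ^ (k - 1)
        + ((d : ℝ) - (k : ℝ)) * (((k : ℝ) + 1) * s ^ k - (k : ℝ) * s ^ (k - 1)) := by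
      rw [hα, hβ]; ring
    linarith
  have hsumc : ∀ G : DegreeDist, Summable (fun d => G.p d * c d) := by
    intro G
    have h1 := (tsum_affine G α β).1
    have h2 : Summable (fun d : ℕ =>
        if d ≤ L then G.p d * c d - G.p d * (α + β * d) else 0) := by
      apply summable_of_ne_finset_zero (s := Finset.range (L + 1))
      intro d hd
      have : ¬ d ≤ L := by simpa [Finset.mem_range, Nat.lt_succ_iff] using hd
      simp [this]
    apply (h1.add h2).congr
    intro d
    by_cases h : d ≤ L
    · simp only [if_pos h]; ring
    · simp [hc, h]
  have hG_val : ∀ G : DegreeDist, (∀ d, 1 ≤ d → d ≤ L → G.p d = p d) →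
      ∑' d : ℕ, G.p d * c d = ∑ d ∈ Finset.Icc 1 L, p d * c d
        + (α + β * mu G - ∑ d ∈ Finset.Icc 1 L, p d * (α + β * d)) := by
    intro G hhead
    rw [tsum_head_tail L p G hhead c (hsumc G)]
    congr 1
    rw [← tsum_tail_affine L p G hhead α β]
    apply tsum_congr
    intro d
    by_cases h : d ≤ L
    · simp [h]
    · simp only [if_neg h, hc]
  have hH_eq : ∑' d : ℕ, H.p d * c d = pgfD H s := by
    apply tsum_congr
    intro d
    by_cases hd0 : d = 0
    · simp [hd0, H.zero]
    by_cases hdL : d ≤ L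
    · simp only [hc, if_pos hdL]; ring
    have hLd : L < d := by omega
    simp only [hc, if_neg hdL]
    by_cases hdk : d = k
    · rw [hdk]
      have h1 : α + β * (k : ℝ) = (k : ℝ) * s ^ (k - 1) := by rw [hα]; ring
      rw [h1]; ring
    by_cases hdk1 : d = k + 1
    · rw [hdk1]
      have h1 : α + β * ((k : ℝ) + 1) = ((k : ℝ) + 1) * s ^ k := by
        rw [hα, hβ]; ring
      have h2 : ((k + 1 : ℕ) : ℝ) = (k : ℝ) + 1 := by push_cast; ring
      rw [h2, h1, show k + 1 - 1 = k by omega]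
      ring
    · rw [hH.2.2.2 d hLd hdk hdk1]; simp
  have hpt : ∀ d : ℕ, F.p d * c d ≤ (d : ℝ) * F.p d * s ^ (d - 1) := by
    intro d
    by_cases hdL : d ≤ L
    · simp only [hc, if_pos hdL]
      apply le_of_eq; ring
    · have hd : L + 1 ≤ d := by omega
      simp only [hc, if_neg hdL]
      calc F.p d * (α + β * d) ≤ F.p d * ((d : ℝ) * s ^ (d - 1)) :=
            mul_le_mul_of_nonneg_left (hchord d hd) (F.nonneg d)
        _ = (d : ℝ) * F.p d * s ^ (d - 1) := by ring
  have hsumF2 : Summable (fun d : ℕ => (d : ℝ) * F.p d * s ^ (d - 1)) := by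
    apply Summable.of_nonneg_of_le _ _ F.mean_summable
    · intro d
      exact mul_nonneg (mul_nonneg (Nat.cast_nonneg d) (F.nonneg d)) (pow_nonneg hs0 _)
    · intro d
      have h1 : s ^ (d - 1) ≤ 1 := pow_le_one₀ hs0 hs_le1
      have h2 : 0 ≤ (d : ℝ) * F.p d := mul_nonneg (Nat.cast_nonneg d) (F.nonneg d)
      calc (d : ℝ) * F.p d * s ^ (d - 1) ≤ (d : ℝ) * F.p d * 1 := by
            exact mul_le_mul_of_nonneg_left h1 h2
        _ = (d : ℝ) * F.p d := mul_one _
  calc pgfD H s = ∑' d : ℕ, H.p d * c d := hH_eq.symm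
    _ = ∑ d ∈ Finset.Icc 1 L, p d * c d
        + (α + β * μ - ∑ d ∈ Finset.Icc 1 L, p d * (α + β * d)) := by
          rw [hG_val H hH.1, hmuH]
    _ = ∑' d : ℕ, F.p d * c d := by rw [hG_val F hF, hFmu]
    _ ≤ ∑' d : ℕ, (d : ℝ) * F.p d * s ^ (d - 1) := Summable.tsum_le_tsum hpt (hsumc F) hsumF2
    _ = pgfD F s := rfl

/-- If `κ ≥ L+1` and `z̃_H ≤ e^{-2/(L+1)}`, then for every `F ∈ F(μ, p_L)`,
`g_F'(z̃_H) ≥ g_H'(z̃_H)` and consequently `z̃_F ≥ z̃_H`. -/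
theorem tail_does_not_determine_giant_stmt15
    (L : ℕ) (hL : 1 ≤ L) (p : ℕ → ℝ)
    (hp : ∀ i, 0 ≤ p i) (hplt : ∑ i ∈ Finset.Icc 1 L, p i < 1)
    (μ : ℝ) (hμ : 0 < μ) (hκ : (L : ℝ) + 1 ≤ kappa L p μ)
    (H : DegreeDist) (hH : IsH L p μ H)
    (zH : ℝ) (hzH : IsSmallestRoot H (mu H) zH)
    (hcond : zH ≤ Real.exp (-(2 / ((L : ℝ) + 1))))
    (F : DegreeDist) (hF : MemF L p F) (hFmu : mu F = μ)
    (zF : ℝ) (hzF : IsSmallestRoot F (mu F) zF) :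
    pgfD H zH ≤ pgfD F zH ∧ zH ≤ zF := by
  have hmuH : mu H = μ := mu_H_eq L hL p hplt μ hκ H hH
  have hzH0 : (0 : ℝ) ≤ zH := hzH.1.1
  have key1 : pgfD H zH ≤ pgfD F zH :=
    key_ineq L hL p hplt μ hκ H hH F hF hFmu zH hzH0 hcond
  refine ⟨key1, ?_⟩
  by_contra hcon
  push_neg at hcon
  have hzF0 : (0 : ℝ) ≤ zF := hzF.1.1
  have hzF1 : zF ≤ 1 := hzF.1.2
  have hzFb : zF ≤ Real.exp (-(2 / ((L : ℝ) + 1))) := le_of_lt (lt_of_lt_of_le hcon hcond)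
  have key2 : pgfD H zF ≤ pgfD F zF :=
    key_ineq L hL p hplt μ hκ H hH F hF hFmu zF hzF0 hzFb
  have hrootF : μ * zF = pgfD F zF := by rw [← hFmu]; exact hzF.2.1
  set k := ⌊kappa L p μ⌋₊ with hk
  have hκ0 : (0 : ℝ) ≤ kappa L p μ := le_trans (by positivity) hκ
  have hLk : L + 1 ≤ k := Nat.le_floor (by exact_mod_cast hκ)
  have hfin : ∀ t : ℝ, pgfD H t = ∑ d ∈ Finset.range (k + 2), (d : ℝ) * H.p d * t ^ (d - 1) := by
    intro t
    apply tsum_eq_sum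
    intro d hd
    rw [Finset.mem_range, not_lt] at hd
    rw [hH.2.2.2 d (by omega) (by omega) (by omega)]
    ring
  have hχcont : Continuous (fun t : ℝ =>
      μ * t - ∑ d ∈ Finset.range (k + 2), (d : ℝ) * H.p d * t ^ (d - 1)) := by
    apply Continuous.sub (continuous_const.mul continuous_id)
    apply continuous_finset_sum
    intro d _
    exact continuous_const.mul (continuous_pow (d - 1))
  have hχ0 : μ * 0 - ∑ d ∈ Finset.range (k + 2), (d : ℝ) * H.p d * (0 : ℝ) ^ (d - 1) ≤ 0 := by
    have h0 : 0 ≤ pgfD H 0 := tsum_nonneg (fun d =>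
      mul_nonneg (mul_nonneg (Nat.cast_nonneg d) (H.nonneg d)) (pow_nonneg le_rfl _))
    have h1 := hfin 0
    rw [← h1]
    linarith
  have hχzF : 0 ≤ μ * zF - ∑ d ∈ Finset.range (k + 2), (d : ℝ) * H.p d * zF ^ (d - 1) := by
    rw [← hfin zF]
    linarith
  have hIVT := intermediate_value_Icc hzF0 hχcont.continuousOn
  obtain ⟨t, ht, hχt⟩ := hIVT (Set.mem_Icc.mpr ⟨hχ0, hχzF⟩)
  have hroot : mu H * t = pgfD H t := by
    rw [hmuH, hfin t]
    simp only at hχt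
    linarith
  have := hzH.2.2 t ⟨ht.1, le_trans ht.2 hzF1⟩ hroot
  have := ht.2
  linarith
end

section
/- Let L ≥ 1 be an integer, let z be a real with 0 < z ≤ e^{−2/(L+1)}, and let N be a random variable taking values in the integers ≥ L+1 with finite mean κ (so κ ≥ L+1). Then E[N·z^N] ≥ ⌊κ⌋·z^{⌊κ⌋}·(⌊κ⌋+1−κ) + (⌊κ⌋+1)·z^{⌊κ⌋+1}·(κ−⌊κ⌋). -/
open scoped BigOperators

noncomputable def auxD (z : ℝ) (n : ℕ) : ℝ := ((n:ℝ)+1) * z^(n+1) - (n:ℝ) * z^n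

lemma auxD_step (z : ℝ) (hz0 : 0 ≤ z) (hz1 : z ≤ 1) (b : ℕ) (hb : ((b:ℝ)+2)*z ≤ b)
    {n : ℕ} (hn : b ≤ n) : auxD z n ≤ auxD z (n+1) := by
  have hcast : (b:ℝ) ≤ n := Nat.cast_le.2 hn
  have hn' : ((n:ℝ)+2)*z ≤ n := by
    nlinarith [mul_nonneg (sub_nonneg.2 hcast) (sub_nonneg.2 hz1)]
  have hzn : 0 ≤ z^n := pow_nonneg hz0 n
  have key : 0 ≤ z^n * ((1-z)*((n:ℝ) - ((n:ℝ)+2)*z)) :=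
    mul_nonneg hzn (mul_nonneg (by linarith) (by linarith))
  have e1 : z^(n+1) = z^n * z := pow_succ z n
  have e2 : z^(n+1+1) = z^n * z * z := by rw [pow_succ, pow_succ]
  unfold auxD
  push_cast
  rw [e1, e2]
  nlinarith [key]

lemma auxD_mono (z : ℝ) (hz0 : 0 ≤ z) (hz1 : z ≤ 1) (b : ℕ) (hb : ((b:ℝ)+2)*z ≤ b)
    {m n : ℕ} (hm : b ≤ m) (hmn : m ≤ n) : auxD z m ≤ auxD z n := by
  induction n, hmn using Nat.le_induction with
  | base => exact le_refl _
  | succ k hk ih => exact ih.trans (auxD_step z hz0 hz1 b hb (hm.trans hk))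

lemma aux_chord (z : ℝ) (hz0 : 0 ≤ z) (hz1 : z ≤ 1) (b : ℕ) (hb : ((b:ℝ)+2)*z ≤ b)
    {a d : ℕ} (ha : b ≤ a) (hd : b ≤ d) :
    (a:ℝ)*z^a + ((d:ℝ) - (a:ℝ)) * auxD z a ≤ (d:ℝ) * z^d := by
  rcases le_total a d with h | h
  · clear hd
    induction d, h using Nat.le_induction with
    | base => simp
    | succ k hk ih =>
      have hDa : auxD z a ≤ auxD z k := auxD_mono z hz0 hz1 b hb ha hk
      have hexp : ((k:ℝ)+1)*z^(k+1) = (k:ℝ)*z^k + auxD z k := by unfold auxD; ring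
      push_cast
      push_cast at ih
      linarith
  · clear ha
    induction a, h using Nat.le_induction with
    | base => simp
    | succ k hk ih =>
      have hbk : b ≤ k := hd.trans hk
      have hstep : auxD z k ≤ auxD z (k+1) := auxD_step z hz0 hz1 b hb hbk
      have hdk : (d:ℝ) - ((k:ℝ)+1) ≤ 0 := by
        have : (d:ℝ) ≤ k := Nat.cast_le.2 hk
        linarith
      have hmul : ((d:ℝ) - ((k:ℝ)+1)) * auxD z (k+1) ≤ ((d:ℝ) - ((k:ℝ)+1)) * auxD z k :=
        mul_le_mul_of_nonpos_left hstep hdk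
      have hexp : ((k:ℝ)+1)*z^(k+1) = (k:ℝ)*z^k + auxD z k := by unfold auxD; ring
      push_cast
      linarith

/-- For `0 < z ≤ e^{-2/(L+1)}` and a random variable `N ≥ L+1` with law `q`
and finite mean `κ`, `E[N z^N] ≥ ⌊κ⌋ z^{⌊κ⌋} (⌊κ⌋+1-κ) + (⌊κ⌋+1) z^{⌊κ⌋+1} (κ-⌊κ⌋)`. -/
theorem tail_does_not_determine_giant_stmt16
    (L : ℕ) (hL : 1 ≤ L) (z : ℝ) (hz0 : 0 < z)
    (hz1 : z ≤ Real.exp (-(2 / ((L : ℝ) + 1))))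
    (q : ℕ → ℝ) (hq : ∀ d, 0 ≤ q d) (hq0 : ∀ d, d < L + 1 → q d = 0)
    (hsum : ∑' d : ℕ, q d = 1)
    (hmean : Summable fun d : ℕ => (d : ℝ) * q d)
    (κ : ℝ) (hκ : κ = ∑' d : ℕ, (d : ℝ) * q d) :
    (⌊κ⌋₊ : ℝ) * z ^ ⌊κ⌋₊ * ((⌊κ⌋₊ : ℝ) + 1 - κ) +
        ((⌊κ⌋₊ : ℝ) + 1) * z ^ (⌊κ⌋₊ + 1) * (κ - (⌊κ⌋₊ : ℝ)) ≤
      ∑' d : ℕ, (d : ℝ) * z ^ d * q d := by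
  -- basic facts about z
  have hzle1 : z ≤ 1 := by
    refine hz1.trans ?_
    have h0 : (0:ℝ) ≤ 2 / ((L:ℝ)+1) := by positivity
    have := Real.exp_le_exp.2 (show -(2 / ((L:ℝ)+1)) ≤ 0 by linarith)
    simpa [Real.exp_zero] using this
  -- the key bound (L+3) z ≤ L+1
  have hLpos : (0:ℝ) < (L:ℝ)+1 := by positivity
  have ht : (0:ℝ) < 2/((L:ℝ)+1) := by positivity
  have h1 : 1 + 2/((L:ℝ)+1) ≤ Real.exp (2/((L:ℝ)+1)) := by
    have := Real.add_one_le_exp (2/((L:ℝ)+1)); linarith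
  have h2 : Real.exp (-(2/((L:ℝ)+1))) ≤ (1 + 2/((L:ℝ)+1))⁻¹ := by
    rw [Real.exp_neg]
    exact inv_anti₀ (by linarith) h1
  have hbz : (((L+1:ℕ):ℝ)+2) * z ≤ ((L+1:ℕ):ℝ) := by
    push_cast
    have hz' : z ≤ (1 + 2/((L:ℝ)+1))⁻¹ := hz1.trans h2
    have hpos : 0 < 1 + 2/((L:ℝ)+1) := by linarith
    have hmul : z * (1 + 2/((L:ℝ)+1)) ≤ 1 := by
      calc z * (1 + 2/((L:ℝ)+1)) ≤ (1 + 2/((L:ℝ)+1))⁻¹ * (1 + 2/((L:ℝ)+1)) :=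
            mul_le_mul_of_nonneg_right hz' (le_of_lt hpos)
        _ = 1 := inv_mul_cancel₀ (ne_of_gt hpos)
    have hmul2 : z * (1 + 2/((L:ℝ)+1)) * ((L:ℝ)+1) ≤ 1 * ((L:ℝ)+1) :=
      mul_le_mul_of_nonneg_right hmul hLpos.le
    have e : (1 + 2/((L:ℝ)+1)) * ((L:ℝ)+1) = (L:ℝ)+3 := by
      rw [add_mul, one_mul, div_mul_cancel₀ _ (ne_of_gt hLpos)]; ring
    have hexpand : z * (1 + 2/((L:ℝ)+1)) * ((L:ℝ)+1) = z * (((L:ℝ)+3)) := by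
      rw [mul_assoc, e]
    rw [hexpand] at hmul2
    linarith
  -- summability of q
  have hsq : Summable q := by
    refine hmean.of_nonneg_of_le hq (fun d => ?_)
    rcases Nat.lt_or_ge d (L+1) with h | h
    · simp [hq0 d h]
    · have h1d : (1:ℝ) ≤ d := by
        have : 1 ≤ d := le_trans (by omega) h
        exact_mod_cast this
      exact le_mul_of_one_le_left (hq d) h1d
  -- κ ≥ L+1
  have hκge : ((L:ℝ)+1) ≤ κ := by
    have hpt : ∀ d : ℕ, ((L:ℝ)+1) * q d ≤ (d:ℝ) * q d := by
      intro d
      rcases Nat.lt_or_ge d (L+1) with h | h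
      · simp [hq0 d h]
      · have : ((L:ℝ)+1) ≤ d := by exact_mod_cast h
        exact mul_le_mul_of_nonneg_right this (hq d)
    have := Summable.tsum_le_tsum hpt (hsq.mul_left _) hmean
    rw [tsum_mul_left, hsum, mul_one] at this
    linarith [hκ ▸ this]
  set a := ⌊κ⌋₊ with ha_def
  have haL : L + 1 ≤ a := by
    have : ((L+1:ℕ):ℝ) ≤ κ := by push_cast; linarith
    exact Nat.le_floor this
  have haR : (a:ℝ) ≤ κ := Nat.floor_le (by linarith)
  -- summability of RHS
  have hsR : Summable (fun d : ℕ => (d:ℝ)*z^d*q d) := by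
    refine hmean.of_nonneg_of_le
      (fun d => mul_nonneg (mul_nonneg (Nat.cast_nonneg d) (pow_nonneg hz0.le d)) (hq d))
      (fun d => ?_)
    have hzd : z^d ≤ 1 := pow_le_one₀ hz0.le hzle1
    calc (d:ℝ)*z^d*q d ≤ (d:ℝ)*1*q d := by
          exact mul_le_mul_of_nonneg_right
            (mul_le_mul_of_nonneg_left hzd (Nat.cast_nonneg d)) (hq d)
      _ = (d:ℝ)*q d := by ring
  -- the linear lower bound function
  have hrw : (fun d : ℕ => ((a:ℝ)*z^a + ((d:ℝ)-(a:ℝ))*auxD z a) * q d)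
      = fun d : ℕ => ((a:ℝ)*z^a - (a:ℝ)*auxD z a) * q d + auxD z a * ((d:ℝ)*q d) := by
    funext d; ring
  have hsL : Summable (fun d : ℕ => ((a:ℝ)*z^a + ((d:ℝ)-(a:ℝ))*auxD z a) * q d) := by
    rw [hrw]; exact (hsq.mul_left _).add (hmean.mul_left _)
  have hpt : ∀ d : ℕ, ((a:ℝ)*z^a + ((d:ℝ)-(a:ℝ))*auxD z a) * q d ≤ (d:ℝ)*z^d*q d := by
    intro d
    rcases Nat.lt_or_ge d (L+1) with h | h
    · simp [hq0 d h]
    · exact mul_le_mul_of_nonneg_right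
        (aux_chord z hz0.le hzle1 (L+1) hbz haL h) (hq d)
  have hmain := Summable.tsum_le_tsum hpt hsL hsR
  have hSl : ∑' d : ℕ, ((a:ℝ)*z^a + ((d:ℝ)-(a:ℝ))*auxD z a) * q d
      = (a:ℝ)*z^a + (κ - (a:ℝ))*auxD z a := by
    rw [hrw, Summable.tsum_add (hsq.mul_left _) (hmean.mul_left _), tsum_mul_left, tsum_mul_left,
      hsum, ← hκ]
    ring
  rw [hSl] at hmain
  have hgoal : (a:ℝ) * z ^ a * ((a:ℝ) + 1 - κ) + ((a:ℝ) + 1) * z ^ (a + 1) * (κ - (a:ℝ))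
      = (a:ℝ)*z^a + (κ - (a:ℝ))*auxD z a := by
    unfold auxD; ring
  rw [hgoal]
  exact hmain
end
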